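/- Let n be odd composite with n - 1 = d·2^s (d odd), W(n) the set of Miller-Rabin witnesses of n, and k a nonzero integer. Then |Σ_{w ∈ W(n)} e(kw/n)| ≤ σ(|k|) + (1 + log₂ n)·(|k|√n + σ(|k|)); in particular the witness exponential sum is O_k(√n log n) = o(n). -/

import Mathlib

open Finset ArithmeticFunction



noncomputable def e (x : ℝ) : ℂ := Complex.exp (2 * Real.pi * Complex.I * x)

lemma e_add (x y : ℝ) : e (x + y) = e x * e y := by
  unfold e; rw [← Complex.exp_add]; push_cast; ring_nf

lemma e_int (m : ℤ) : e m = 1 := by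
  unfold e
  rw [show (2 * (Real.pi:ℂ) * Complex.I * (m:ℝ)) = (m:ℤ) * (2 * Real.pi * Complex.I) by push_cast; ring]
  exact Complex.exp_int_mul_two_pi_mul_I m

lemma e_zero : e 0 = 1 := by simpa using e_int 0

lemma norm_e (x : ℝ) : ‖e x‖ = 1 := by
  unfold e
  rw [Complex.norm_exp]
  simp [Complex.exp_eq_one_iff]

/-- additive character of level n on ℤ -/
noncomputable def Psi (n : ℕ) (a : ℤ) : ℂ := e (a / n)

lemma Psi_congr {n : ℕ} (hn : 0 < n) {a b : ℤ} (h : (n:ℤ) ∣ a - b) : Psi n a = Psi n b := by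
  obtain ⟨t, ht⟩ := h
  have ha : a = b + n * t := by linarith
  have hne : (n:ℝ) ≠ 0 := by positivity
  unfold Psi
  rw [ha, show ((b + n*t : ℤ) : ℝ) / n = (b:ℝ)/n + (t:ℝ) by push_cast; field_simp]
  rw [e_add, e_int, mul_one]

lemma Psi_pow (n : ℕ) (hn : 0 < n) (t : ℤ) (j : ℕ) : Psi n (t * j) = Psi n t ^ j := by
  unfold Psi e
  rw [← Complex.exp_nat_mul]
  congr 1
  push_cast
  ring

lemma Psi_geom (n : ℕ) (hn : 0 < n) (t : ℤ) (h : ¬ (n:ℤ) ∣ t) :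
    ∑ j ∈ range n, Psi n (t * j) = 0 := by
  have hroot : Psi n t ^ n = 1 := by
    unfold Psi e
    rw [← Complex.exp_nat_mul]
    rw [show (n : ℂ) * (2 * (Real.pi:ℂ) * Complex.I * ((t:ℝ)/n : ℝ)) = (t:ℤ) * (2 * Real.pi * Complex.I) by
      push_cast
      have : (n:ℂ) ≠ 0 := by exact_mod_cast Nat.cast_ne_zero.mpr hn.ne'
      field_simp]
    exact Complex.exp_int_mul_two_pi_mul_I t
  have hne : Psi n t ≠ 1 := by
    intro h1
    unfold Psi e at h1
    rw [Complex.exp_eq_one_iff] at h1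
    obtain ⟨m, hm⟩ := h1
    push_cast at hm
    have h2pi : (2 * (Real.pi:ℂ) * Complex.I) ≠ 0 := by
      simp [Real.pi_ne_zero, Complex.I_ne_zero]
    have : ((t:ℝ)/n : ℂ) = (m:ℂ) := by
      apply mul_left_cancel₀ h2pi
      push_cast
      rw [hm]; ring
    have hnc : (n:ℂ) ≠ 0 := by exact_mod_cast Nat.cast_ne_zero.mpr hn.ne'
    have : (t:ℂ) = (m:ℂ) * n := by
      push_cast at this ⊢
      field_simp at this
      linear_combination this
    have : t = m * n := by exact_mod_cast this
    exact h ⟨m, by linarith⟩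
  calc ∑ j ∈ range n, Psi n (t * j) = ∑ j ∈ range n, Psi n t ^ j := by
        exact Finset.sum_congr rfl fun j _ => Psi_pow n hn t j
    _ = (Psi n t ^ n - 1) / (Psi n t - 1) := geom_sum_eq hne n
    _ = 0 := by rw [hroot]; simp


lemma conj_e (x : ℝ) : (starRingEnd ℂ) (e x) = e (-x) := by
  unfold e
  rw [← Complex.exp_conj]
  congr 1
  have h2 : (starRingEnd ℂ) 2 = 2 := by
    rw [show (2:ℂ) = ((2:ℝ):ℂ) by norm_num, Complex.conj_ofReal]
  rw [map_mul, map_mul, map_mul, Complex.conj_I, h2, Complex.conj_ofReal, Complex.conj_ofReal]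
  push_cast
  ring

lemma Psi_add (n : ℕ) (a b : ℤ) : Psi n a * Psi n b = Psi n (a + b) := by
  unfold Psi
  rw [← e_add]
  congr 1
  push_cast
  ring

lemma conj_Psi (n : ℕ) (a : ℤ) : (starRingEnd ℂ) (Psi n a) = Psi n (-a) := by
  unfold Psi
  rw [conj_e]
  congr 1
  push_cast
  ring

noncomputable def psiZ (n : ℕ) (x : ZMod n) : ℂ := Psi n (x.val)

lemma psiZ_cast (n : ℕ) [NeZero n] (j : ℤ) : psiZ n (j : ZMod n) = Psi n j := by
  apply Psi_congr (Nat.pos_of_ne_zero (NeZero.ne n))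
  rw [← ZMod.intCast_zmod_eq_zero_iff_dvd]
  push_cast
  simp [ZMod.natCast_zmod_val, ZMod.intCast_zmod_cast]

lemma sum_zmod_eq_sum_range (n : ℕ) [NeZero n] (f : ZMod n → ℂ) :
    ∑ a : ZMod n, f a = ∑ j ∈ range n, f (j : ZMod n) := by
  refine Finset.sum_nbij' (fun a => a.val) (fun j => (j : ZMod n)) ?_ ?_ ?_ ?_ ?_
  · intro a _; exact mem_range.mpr a.val_lt
  · intro j _; exact mem_univ _
  · intro a _; exact ZMod.natCast_zmod_val a
  · intro j hj; exact ZMod.val_natCast_of_lt (mem_range.mp hj)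
  · intro a _; rw [ZMod.natCast_zmod_val]

lemma sum_psiZ (n : ℕ) [NeZero n] (x : ZMod n) :
    ∑ a : ZMod n, psiZ n (x * a) = if x = 0 then (n:ℂ) else 0 := by
  have hn : 0 < n := Nat.pos_of_ne_zero (NeZero.ne n)
  split_ifs with h
  · subst h
    have : ∀ a : ZMod n, psiZ n (0 * a) = 1 := by
      intro a; rw [zero_mul]
      show Psi n ((0 : ZMod n).val) = 1
      simp [Psi, ZMod.val_zero, e_zero]
    simp only [this]
    simp [ZMod.card n]
  · rw [sum_zmod_eq_sum_range]
    have key : ∀ j ∈ range n, psiZ n (x * (j:ZMod n)) = Psi n ((x.val : ℤ) * j) := by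
      intro j _
      have : (x * (j : ZMod n)) = (((x.val : ℤ) * j : ℤ) : ZMod n) := by
        push_cast
        rw [ZMod.natCast_zmod_val]
      rw [this, psiZ_cast]
    rw [Finset.sum_congr rfl key]
    apply Psi_geom n hn
    intro hdvd
    apply h
    have hlt : x.val < n := x.val_lt
    have : (n:ℤ) ∣ (x.val:ℤ) := hdvd
    have : n ∣ x.val := Int.ofNat_dvd.mp (by exact_mod_cast this)
    have : x.val = 0 := Nat.eq_zero_of_dvd_of_lt this hlt
    exact (ZMod.val_eq_zero x).mp this

-- kernel cardinality bound
lemma card_ker_le (n : ℕ) [NeZero n] (k' : ℕ) (hk : k' ≠ 0) :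
    (univ.filter fun y : ZMod n => (k' : ZMod n) * y = 0).card ≤ Nat.gcd k' n := by
  have hn : 0 < n := Nat.pos_of_ne_zero (NeZero.ne n)
  have hgpos : 0 < Nat.gcd k' n := Nat.gcd_pos_of_pos_left _ (Nat.pos_of_ne_zero hk)
  have hgn : Nat.gcd k' n ∣ n := Nat.gcd_dvd_right _ _
  have hgk : Nat.gcd k' n ∣ k' := Nat.gcd_dvd_left _ _
  have hn₁pos : 0 < n / Nat.gcd k' n := Nat.div_pos (Nat.le_of_dvd hn hgn) hgpos
  have hng : n = Nat.gcd k' n * (n / Nat.gcd k' n) := (Nat.mul_div_cancel' hgn).symm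
  have hkg : k' = Nat.gcd k' n * (k' / Nat.gcd k' n) := (Nat.mul_div_cancel' hgk).symm
  have hcop : Nat.Coprime (k' / Nat.gcd k' n) (n / Nat.gcd k' n) :=
    Nat.coprime_div_gcd_div_gcd hgpos
  have hmem : ∀ y : ZMod n, ((k' : ZMod n) * y = 0 ↔ (n / Nat.gcd k' n) ∣ y.val) := by
    intro y
    have h1 : (k' : ZMod n) * y = ((k' * y.val : ℕ) : ZMod n) := by
      push_cast
      rw [ZMod.natCast_zmod_val]
    rw [h1, ZMod.natCast_eq_zero_iff]
    constructor
    · intro hdvd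
      have h2 : Nat.gcd k' n * (n / Nat.gcd k' n) ∣
          Nat.gcd k' n * ((k' / Nat.gcd k' n) * y.val) := by
        rw [← mul_assoc, ← hkg, ← hng]; exact hdvd
      have h3 := (Nat.mul_dvd_mul_iff_left hgpos).mp h2
      exact hcop.symm.dvd_of_dvd_mul_left h3
    · intro hdvd
      obtain ⟨c, hc⟩ := hdvd
      have heq : k' * y.val =
          (Nat.gcd k' n * (n / Nat.gcd k' n)) * ((k' / Nat.gcd k' n) * c) := by
        conv_lhs => rw [hkg, hc]
        ring
      rw [heq, ← hng]
      exact dvd_mul_right _ _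
  calc (univ.filter fun y : ZMod n => (k' : ZMod n) * y = 0).card
      ≤ (range (Nat.gcd k' n)).card := by
        apply Finset.card_le_card_of_injOn (fun y => y.val / (n / Nat.gcd k' n))
        · intro y hy
          simp only [mem_coe, mem_filter] at hy
          simp only [mem_coe, mem_range]
          have h1 := (hmem y).mp hy.2
          have : y.val / (n / Nat.gcd k' n) < Nat.gcd k' n ↔
              y.val < Nat.gcd k' n * (n / Nat.gcd k' n) := Nat.div_lt_iff_lt_mul hn₁pos
          rw [this, ← hng]
          exact y.val_lt
        · intro y hy z hz hyz
          simp only [coe_filter, Set.mem_setOf_eq] at hy hz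
          have h1 := (hmem y).mp hy.2
          have h2 := (hmem z).mp hz.2
          apply ZMod.val_injective
          rw [← Nat.mul_div_cancel' h1, ← Nat.mul_div_cancel' h2]
          exact congrArg (HMul.hMul (n / Nat.gcd k' n)) hyz
    _ = Nat.gcd k' n := card_range _


lemma psiZ_sub (n : ℕ) [NeZero n] (x y : ZMod n) :
    psiZ n x * (starRingEnd ℂ) (psiZ n y) = psiZ n (x - y) := by
  have hn : 0 < n := Nat.pos_of_ne_zero (NeZero.ne n)
  show Psi n x.val * (starRingEnd ℂ) (Psi n y.val) = Psi n (x - y).val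
  rw [conj_Psi, Psi_add]
  apply Psi_congr hn
  rw [← ZMod.intCast_zmod_eq_zero_iff_dvd]
  push_cast
  simp [ZMod.natCast_zmod_val]

lemma ker_int_eq (n : ℕ) [NeZero n] (k : ℤ) (y : ZMod n) :
    ((k : ZMod n) * y = 0) ↔ ((k.natAbs : ZMod n) * y = 0) := by
  have hcast : ((k : ZMod n)) = (k.natAbs : ZMod n) ∨ ((k : ZMod n)) = -(k.natAbs : ZMod n) := by
    rcases Int.natAbs_eq k with h | h
    · left
      have := congrArg (Int.cast : ℤ → ZMod n) h
      rwa [Int.cast_natCast] at this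
    · right
      have := congrArg (Int.cast : ℤ → ZMod n) h
      rwa [Int.cast_neg, Int.cast_natCast] at this
  rcases hcast with h | h
  · rw [h]
  · rw [h, neg_mul, neg_eq_zero]

theorem coset_sum_bound (n : ℕ) [NeZero n] (hn : 1 < n) (k : ℤ) (hk : k ≠ 0)
    (m : ℕ) (hm : 0 < m) (c : ZMod n) (hc : IsUnit c) :
    ‖∑ x ∈ univ.filter (fun x : ZMod n => x ^ m = c), psiZ n ((k : ZMod n) * x)‖ ≤
      (k.natAbs : ℝ) * Real.sqrt n := by
  classical
  have hk' : (1 : ℕ) ≤ k.natAbs := Nat.one_le_iff_ne_zero.mpr (Int.natAbs_ne_zero.mpr hk)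
  have hrhs : (0:ℝ) ≤ (k.natAbs : ℝ) * Real.sqrt n := by positivity
  set F := univ.filter (fun x : ZMod n => x ^ m = c) with hF
  rcases F.eq_empty_or_nonempty with hFe | ⟨x₀, hx₀F⟩
  · rw [hFe]; simpa using hrhs
  have hx₀ : x₀ ^ m = c := (mem_filter.mp hx₀F).2
  have hx₀u : IsUnit x₀ := (isUnit_pow_iff hm.ne').mp (hx₀ ▸ hc)
  set v := hx₀u.unit with hv
  have hvx : (v : ZMod n) = x₀ := hx₀u.unit_spec
  set HF := univ.filter (fun u : ZMod n => u ^ m = 1) with hHF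
  have hHFmem : ∀ u, u ∈ HF ↔ u ^ m = 1 := by
    intro u; simp [hHF]
  have h1HF : (1 : ZMod n) ∈ HF := (hHFmem 1).mpr (one_pow m)
  have hcard : 0 < HF.card := card_pos.mpr ⟨1, h1HF⟩
  -- translated sums
  set S : ZMod n → ℂ := fun a => ∑ u ∈ HF, psiZ n ((k : ZMod n) * a * u) with hS
  -- the class sum is S x₀
  have hFS : ∑ x ∈ F, psiZ n ((k : ZMod n) * x) = S x₀ := by
    rw [hS]
    refine Finset.sum_nbij' (fun x => (↑v⁻¹ : ZMod n) * x) (fun u => x₀ * u) ?_ ?_ ?_ ?_ ?_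
    · intro x hx
      rw [hHFmem]
      have hxm : x ^ m = c := (mem_filter.mp hx).2
      have h1 : (↑v⁻¹ : ZMod n) ^ m * x₀ ^ m = 1 := by
        rw [← mul_pow, show (↑v⁻¹ : ZMod n) * x₀ = 1 by rw [← hvx, Units.inv_mul], one_pow]
      rw [mul_pow, hxm, ← hx₀]
      exact h1
    · intro u hu
      rw [hF, mem_filter]
      refine ⟨mem_univ _, ?_⟩
      rw [mul_pow, hx₀, (hHFmem u).mp hu, mul_one]
    · intro x _
      rw [← mul_assoc, ← hvx, Units.mul_inv, one_mul]
    · intro u _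
      rw [← mul_assoc, ← hvx, Units.inv_mul, one_mul]
    · intro x _
      congr 1
      rw [← hvx, mul_assoc, ← mul_assoc (v : ZMod n), Units.mul_inv, one_mul]
  rw [hFS]
  -- translate invariance
  have hinv : ∀ w ∈ HF, S (x₀ * w) = S x₀ := by
    intro w hw
    have hwm : w ^ m = 1 := (hHFmem w).mp hw
    rw [hS]
    refine Finset.sum_nbij' (fun u => w * u) (fun u => w ^ (m - 1) * u) ?_ ?_ ?_ ?_ ?_
    · intro u hu
      rw [hHFmem, mul_pow, hwm, (hHFmem u).mp hu, mul_one]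
    · intro u hu
      rw [hHFmem, mul_pow, ← pow_mul, mul_comm (m-1) m, pow_mul, hwm, one_pow,
        (hHFmem u).mp hu, mul_one]
    · intro u _
      rw [← mul_assoc]
      rw [show w ^ (m-1) * w = w ^ m by rw [← pow_succ]; congr 1; omega]
      rw [hwm, one_mul]
    · intro u _
      rw [← mul_assoc]
      rw [show w * w ^ (m-1) = w ^ m by rw [← pow_succ']; congr 1; omega]
      rw [hwm, one_mul]
    · intro u _
      congr 1
      ring
  -- second moment identity
  set g := Nat.gcd k.natAbs n with hg
  have hgk : (g : ℝ) ≤ (k.natAbs : ℝ) ^ 2 := by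
    have h1 : g ≤ k.natAbs := Nat.le_of_dvd (by omega) (Nat.gcd_dvd_left _ _)
    have h2 : k.natAbs ≤ k.natAbs ^ 2 := by nlinarith [hk']
    exact_mod_cast h1.trans h2
  have key : ∑ a : ZMod n, ‖S a‖ ^ 2 ≤ (n : ℝ) * (HF.card * g) := by
    -- complex computation
    have hcplx : ∑ a : ZMod n, (‖S a‖ ^ 2 : ℂ) =
        ∑ u ∈ HF, ∑ u' ∈ HF, (if (k : ZMod n) * (u - u') = 0 then (n : ℂ) else 0) := by
      have hterm : ∀ a : ZMod n, (‖S a‖ ^ 2 : ℂ) =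
          ∑ u ∈ HF, ∑ u' ∈ HF, psiZ n (((k : ZMod n) * (u - u')) * a) := by
        intro a
        have : (‖S a‖ ^ 2 : ℂ) = S a * (starRingEnd ℂ) (S a) := by
          rw [Complex.mul_conj]
          norm_cast
          rw [← Complex.sq_norm]
        rw [this, hS]
        simp only [map_sum]
        rw [Finset.sum_mul_sum]
        refine Finset.sum_congr rfl fun u _ => Finset.sum_congr rfl fun u' _ => ?_
        rw [psiZ_sub]
        congr 1
        ring
      rw [Finset.sum_congr rfl fun a _ => hterm a, Finset.sum_comm]
      refine Finset.sum_congr rfl fun u _ => ?_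
      rw [Finset.sum_comm]
      refine Finset.sum_congr rfl fun u' _ => ?_
      exact sum_psiZ n _
    -- bound the RHS
    have hcount : ∀ u' ∈ HF,
        (HF.filter (fun u => (k : ZMod n) * (u - u') = 0)).card ≤ g := by
      intro u' _
      calc (HF.filter (fun u => (k : ZMod n) * (u - u') = 0)).card
          ≤ (univ.filter (fun y : ZMod n => (k.natAbs : ZMod n) * y = 0)).card := by
            apply Finset.card_le_card_of_injOn (fun u => u - u')
            · intro u hu
              simp only [mem_coe, mem_filter] at hu ⊢
              exact ⟨mem_univ _, (ker_int_eq n k _).mp hu.2⟩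
            · intro a _ b _ hab
              exact sub_left_injective hab
        _ ≤ g := card_ker_le n k.natAbs (Int.natAbs_ne_zero.mpr hk)
    -- pass to real
    have hreal : ∑ a : ZMod n, ‖S a‖ ^ 2 =
        ∑ u' ∈ HF, ((n : ℝ) * (HF.filter (fun u => (k : ZMod n) * (u - u') = 0)).card) := by
      have hrhs2 : ∑ u ∈ HF, ∑ u' ∈ HF, (if (k : ZMod n) * (u - u') = 0 then (n : ℂ) else 0)
          = ∑ u' ∈ HF, ((n : ℂ) * (HF.filter (fun u => (k : ZMod n) * (u - u') = 0)).card) := by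
        rw [Finset.sum_comm]
        refine Finset.sum_congr rfl fun u' _ => ?_
        rw [← Finset.sum_filter, Finset.sum_const]
        push_cast
        ring
      have := hcplx.trans hrhs2
      have h2 : ((∑ a : ZMod n, ‖S a‖ ^ 2 : ℝ) : ℂ) =
          ((∑ u' ∈ HF, ((n : ℝ) * (HF.filter (fun u => (k : ZMod n) * (u - u') = 0)).card) : ℝ) : ℂ) := by
        push_cast
        exact this
      exact_mod_cast h2
    rw [hreal]
    calc ∑ u' ∈ HF, ((n:ℝ) * (HF.filter (fun u => (k : ZMod n) * (u - u') = 0)).card)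
        ≤ ∑ u' ∈ HF, ((n:ℝ) * g) := by
          refine Finset.sum_le_sum fun u' hu' => ?_
          have := hcount u' hu'
          have hn0 : (0:ℝ) ≤ (n:ℝ) := by positivity
          apply mul_le_mul_of_nonneg_left _ hn0
          exact_mod_cast this
      _ = (n : ℝ) * (HF.card * g) := by
          rw [Finset.sum_const, nsmul_eq_mul]
          ring
  -- lower bound via translates
  have hlow : (HF.card : ℝ) * ‖S x₀‖ ^ 2 ≤ ∑ a : ZMod n, ‖S a‖ ^ 2 := by
    have himg : ∑ a ∈ HF.image (fun u => x₀ * u), ‖S a‖ ^ 2 = (HF.card : ℝ) * ‖S x₀‖ ^ 2 := by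
      rw [Finset.sum_image]
      · rw [Finset.sum_congr rfl (fun u hu => by rw [hinv u hu]), Finset.sum_const, nsmul_eq_mul]
      · intro a _ b _ hab
        exact hx₀u.mul_right_cancel (by simp only at hab; rwa [mul_comm x₀ a, mul_comm x₀ b] at hab)
    rw [← himg]
    apply Finset.sum_le_sum_of_subset_of_nonneg (Finset.subset_univ _)
    intro i _ _
    positivity
  have hsq : ‖S x₀‖ ^ 2 ≤ (n : ℝ) * g := by
    have h := hlow.trans key
    have hcardR : (0:ℝ) < HF.card := by exact_mod_cast hcard
    nlinarith [h, hcardR]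
  calc ‖S x₀‖ = Real.sqrt (‖S x₀‖ ^ 2) := (Real.sqrt_sq (norm_nonneg _)).symm
    _ ≤ Real.sqrt ((n:ℝ) * (k.natAbs : ℝ)^2) := by
        apply Real.sqrt_le_sqrt
        calc ‖S x₀‖^2 ≤ (n:ℝ) * g := hsq
          _ ≤ (n:ℝ) * (k.natAbs : ℝ)^2 := by
              apply mul_le_mul_of_nonneg_left hgk (by positivity)
    _ = (k.natAbs : ℝ) * Real.sqrt n := by
        rw [Real.sqrt_mul (by positivity), Real.sqrt_sq (by positivity)]
        ring


lemma sum_filter_range_zmod (n : ℕ) [NeZero n] (k : ℤ) (P : ZMod n → Prop) [DecidablePred P] :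
    ∑ a ∈ (range n).filter (fun a : ℕ => P (a : ZMod n)), e ((k:ℝ) * a / n)
      = ∑ x ∈ univ.filter P, psiZ n ((k : ZMod n) * x) := by
  refine Finset.sum_nbij' (fun a => (a : ZMod n)) (fun x => x.val) ?_ ?_ ?_ ?_ ?_
  · intro a ha
    rw [mem_filter] at ha ⊢
    exact ⟨mem_univ _, ha.2⟩
  · intro x hx
    rw [mem_filter] at hx ⊢
    constructor
    · exact mem_range.mpr x.val_lt
    · rw [ZMod.natCast_zmod_val]; exact hx.2
  · intro a ha
    exact ZMod.val_natCast_of_lt (mem_range.mp (mem_filter.mp ha).1)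
  · intro x _
    exact ZMod.natCast_zmod_val x
  · intro a _
    have h1 : (k : ZMod n) * (a : ZMod n) = ((k * a : ℤ) : ZMod n) := by push_cast; ring
    rw [h1, psiZ_cast]
    unfold Psi
    congr 1
    push_cast
    ring

lemma isUnit_iff_pow_card (n : ℕ) [NeZero n] (x : ZMod n) :
    IsUnit x ↔ x ^ Fintype.card (ZMod n)ˣ = 1 := by
  constructor
  · intro hx
    obtain ⟨u, rfl⟩ := hx
    rw [← Units.val_pow_eq_pow_val, pow_card_eq_one, Units.val_one]
  · intro hx
    have hN : 0 < Fintype.card (ZMod n)ˣ := Fintype.card_pos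
    apply IsUnit.of_mul_eq_one (a := x) (x ^ (Fintype.card (ZMod n)ˣ - 1))
    rw [← pow_succ']
    rw [show Fintype.card (ZMod n)ˣ - 1 + 1 = Fintype.card (ZMod n)ˣ by omega]
    exact hx

lemma class_bound (n : ℕ) (hn : 1 < n) (k : ℤ) (hk : k ≠ 0) (m : ℕ) (hm : 0 < m)
    (c : ZMod n) (hc : IsUnit c) :
    ‖∑ a ∈ (range n).filter (fun a : ℕ => (a : ZMod n) ^ m = c), e ((k:ℝ) * a / n)‖ ≤
      (k.natAbs : ℝ) * Real.sqrt n := by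
  haveI : NeZero n := ⟨by omega⟩
  rw [sum_filter_range_zmod n k (fun x => x ^ m = c)]
  exact coset_sum_bound n hn k hk m hm c hc


/-- the exponential sum over the Miller-Rabin witness set is
O_k(√n log n). -/
theorem witness_sum_bound (n d s : ℕ) (hodd : Odd n) (hcomp : ¬ n.Prime) (hn : 1 < n)
    (hd : Odd d) (hds : n - 1 = d * 2 ^ s) (k : ℤ) (hk : k ≠ 0) :
    ‖∑ w ∈ (Finset.range n).filter (fun a : ℕ => 1 < a ∧ Nat.gcd a n = 1 ∧
        (a : ZMod n) ^ d ≠ 1 ∧ ∀ j < s, (a : ZMod n) ^ (2 ^ j * d) ≠ -1),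
        e ((k : ℝ) * w / n)‖ ≤
      (sigma 1 k.natAbs : ℝ) +
        (1 + Real.logb 2 n) * ((k.natAbs : ℝ) * Real.sqrt n + (sigma 1 k.natAbs : ℝ)) := by
  classical
  haveI : NeZero n := ⟨by omega⟩
  haveI : Fact (1 < n) := ⟨hn⟩
  have hn3 : 3 ≤ n := by
    rcases hodd with ⟨t, ht⟩; omega
  have hd1 : 1 ≤ d := by
    rcases hd with ⟨t, ht⟩; omega
  haveI : Fact (2 < n) := ⟨by omega⟩
  have hne11 : (-1 : ZMod n) ≠ 1 := ZMod.neg_one_ne_one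
  set f : ℕ → ℂ := fun a => e ((k : ℝ) * a / n) with hf
  set K : ℝ := (k.natAbs : ℝ) * Real.sqrt n with hK
  have hKpos : 0 ≤ K := by rw [hK]; positivity
  have hkabs : 1 ≤ k.natAbs := Nat.one_le_iff_ne_zero.mpr (Int.natAbs_ne_zero.mpr hk)
  have hσ : (1 : ℝ) ≤ (sigma 1 k.natAbs : ℝ) := by
    have h1 : k.natAbs ≤ sigma 1 k.natAbs := by
      rw [ArithmeticFunction.sigma_one_apply]
      exact Finset.single_le_sum (f := fun x => x) (fun i _ => Nat.zero_le i)
        (Nat.mem_divisors_self _ (by omega))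
    have h2 : (1:ℕ) ≤ sigma 1 k.natAbs := le_trans hkabs h1
    exact_mod_cast h2
  have hσ0 : (0 : ℝ) ≤ (sigma 1 k.natAbs : ℝ) := by linarith
  -- log facts
  have hlogb_of_pow : ∀ t : ℕ, 2 ^ t ≤ n → (t : ℝ) ≤ Real.logb 2 n := by
    intro t ht
    have h1 : Real.logb 2 ((2:ℝ) ^ t) = t := by
      rw [Real.logb_pow, Real.logb_self_eq_one (by norm_num)]
      ring
    calc (t : ℝ) = Real.logb 2 ((2:ℝ)^t) := h1.symm
      _ ≤ Real.logb 2 n := by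
          apply Real.logb_le_logb_of_le (by norm_num) (by positivity)
          exact_mod_cast ht
  have h2s : 2 ^ s ≤ n := by
    have : 2 ^ s ≤ d * 2 ^ s := Nat.le_mul_of_pos_left _ (by omega)
    omega
  have hs_logb : (s : ℝ) ≤ Real.logb 2 n := hlogb_of_pow s h2s
  have hlogb0 : 0 ≤ Real.logb 2 n := Real.logb_nonneg (by norm_num) (by exact_mod_cast hn.le)
  -- the class sets
  set C := (range n).filter (fun a => Nat.gcd a n = 1) with hC
  set A1 := (range n).filter (fun a => Nat.gcd a n = 1 ∧ (a : ZMod n) ^ d = 1) with hA1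
  set B : ℕ → Finset ℕ :=
    fun j => (range n).filter (fun a => Nat.gcd a n = 1 ∧ (a : ZMod n) ^ (2^j*d) = -1) with hB
  set p : ℕ → Prop :=
    fun a => 1 < a ∧ (a : ZMod n) ^ d ≠ 1 ∧ ∀ j < s, (a : ZMod n) ^ (2 ^ j * d) ≠ -1 with hp
  have hWC : (Finset.range n).filter (fun a : ℕ => 1 < a ∧ Nat.gcd a n = 1 ∧
        (a : ZMod n) ^ d ≠ 1 ∧ ∀ j < s, (a : ZMod n) ^ (2 ^ j * d) ≠ -1) = C.filter p := by
    rw [hC, Finset.filter_filter]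
    apply Finset.filter_congr
    intro a _
    rw [hp]
    tauto
  -- the partition
  have hrest : C.filter (fun a => ¬ p a) = A1 ∪ (range s).biUnion B := by
    ext a
    simp only [hC, hA1, hB, hp, mem_filter, mem_union, mem_biUnion, mem_range]
    constructor
    · rintro ⟨⟨han, hgcd⟩, hnp⟩
      push_neg at hnp
      by_cases hq : (a : ZMod n) ^ d = 1
      · exact Or.inl ⟨han, hgcd, hq⟩
      · by_cases ha1 : 1 < a
        · obtain ⟨j, hjs, hjr⟩ := hnp ha1 hq
          exact Or.inr ⟨j, hjs, han, hgcd, hjr⟩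
        · -- a ≤ 1 and coprime means a = 1, so a^d = 1, contradiction
          exfalso
          apply hq
          have ha : a = 1 := by
            interval_cases a
            · simp at hgcd; omega
            · rfl
          rw [ha]
          push_cast
          exact one_pow d
    · rintro (⟨han, hgcd, hq⟩ | ⟨j, hjs, han, hgcd, hjr⟩)
      · refine ⟨⟨han, hgcd⟩, ?_⟩
        intro hcon
        exact hcon.2.1 hq
      · refine ⟨⟨han, hgcd⟩, ?_⟩
        intro hcon
        exact hcon.2.2 j hjs hjr
  have hdisjA : Disjoint A1 ((range s).biUnion B) := by
    rw [Finset.disjoint_left]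
    intro a ha hab
    rw [hA1, mem_filter] at ha
    rw [mem_biUnion] at hab
    obtain ⟨j, _, haj⟩ := hab
    rw [hB, mem_filter] at haj
    apply hne11
    rw [← haj.2.2]
    rw [mul_comm, pow_mul, ha.2.2, one_pow]
  have hpairB : ∀ j j', j < j' → ∀ a, a ∈ B j → a ∈ B j' → False := by
    intro j j' hjj' a haj haj'
    rw [hB, mem_filter] at haj haj'
    apply hne11
    rw [← haj'.2.2]
    have hexp : 2 ^ j' * d = (2 ^ j * d) * 2 ^ (j' - j) := by
      rw [show j' = j + (j' - j) by omega, pow_add]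
      ring_nf
      rw [show j + (j' - j) - j = j' - j by omega]
    rw [hexp, pow_mul, haj.2.2]
    apply Even.neg_one_pow
    exact Nat.even_pow.mpr ⟨even_two, by omega⟩
  have hpairwise : (↑(range s) : Set ℕ).PairwiseDisjoint B := by
    intro j hj j' hj' hne
    rw [Function.onFun, Finset.disjoint_left]
    intro a haj haj'
    rcases lt_or_gt_of_ne hne with h | h
    · exact hpairB j j' h a haj haj'
    · exact hpairB j' j h a haj' haj
  have hsplit : ∑ a ∈ C, f a = (∑ a ∈ C.filter p, f a) +
      ((∑ a ∈ A1, f a) + ∑ j ∈ range s, ∑ a ∈ B j, f a) := by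
    rw [← Finset.sum_filter_add_sum_filter_not C p f]
    congr 1
    rw [hrest, Finset.sum_union hdisjA, Finset.sum_biUnion hpairwise]
  -- bounds
  have hboundC : ‖∑ a ∈ C, f a‖ ≤ K := by
    have hCeq : C = (range n).filter
        (fun a : ℕ => (a : ZMod n) ^ (Fintype.card (ZMod n)ˣ) = 1) := by
      rw [hC]
      apply Finset.filter_congr
      intro a _
      rw [← isUnit_iff_pow_card n (a : ZMod n)]
      exact (ZMod.isUnit_iff_coprime a n).symm
    rw [hCeq]
    exact class_bound n hn k hk _ Fintype.card_pos 1 isUnit_one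
  have hboundB : ∀ j, ‖∑ a ∈ B j, f a‖ ≤ K := by
    intro j
    have hBeq : B j = (range n).filter (fun a : ℕ => (a : ZMod n) ^ (2^j*d) = -1) := by
      rw [hB]
      apply Finset.filter_congr
      intro a _
      constructor
      · rintro ⟨_, h⟩; exact h
      · intro h
        refine ⟨?_, h⟩
        have hu : IsUnit ((a : ZMod n) ^ (2^j*d)) := h ▸ isUnit_one.neg
        have hu2 : IsUnit (a : ZMod n) :=
          (isUnit_pow_iff (by positivity : 0 < 2^j*d).ne').mp hu
        exact (ZMod.isUnit_iff_coprime a n).mp hu2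
    rw [hBeq]
    exact class_bound n hn k hk _ (by positivity) (-1) isUnit_one.neg
  have hboundBsum : ‖∑ j ∈ range s, ∑ a ∈ B j, f a‖ ≤ s * K := by
    calc ‖∑ j ∈ range s, ∑ a ∈ B j, f a‖ ≤ ∑ j ∈ range s, ‖∑ a ∈ B j, f a‖ :=
          norm_sum_le _ _
      _ ≤ ∑ _j ∈ range s, K := Finset.sum_le_sum (fun j _ => hboundB j)
      _ = s * K := by rw [Finset.sum_const, card_range, nsmul_eq_mul]
  -- main norm bound
  have hmain : ‖∑ a ∈ C.filter p, f a‖ ≤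
      ‖∑ a ∈ C, f a‖ + ‖∑ a ∈ A1, f a‖ + ‖∑ j ∈ range s, ∑ a ∈ B j, f a‖ := by
    have h1 : ∑ a ∈ C.filter p, f a = ∑ a ∈ C, f a -
        ((∑ a ∈ A1, f a) + ∑ j ∈ range s, ∑ a ∈ B j, f a) := by
      rw [hsplit]; ring
    rw [h1]
    calc ‖∑ a ∈ C, f a - ((∑ a ∈ A1, f a) + ∑ j ∈ range s, ∑ a ∈ B j, f a)‖
        ≤ ‖∑ a ∈ C, f a‖ + ‖(∑ a ∈ A1, f a) + ∑ j ∈ range s, ∑ a ∈ B j, f a‖ :=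
          norm_sub_le _ _
      _ ≤ ‖∑ a ∈ C, f a‖ + (‖∑ a ∈ A1, f a‖ + ‖∑ j ∈ range s, ∑ a ∈ B j, f a‖) := by
          have := norm_add_le (∑ a ∈ A1, f a) (∑ j ∈ range s, ∑ a ∈ B j, f a)
          linarith
      _ = _ := by ring
  rw [hWC]
  by_cases hd3 : d = 1
  · -- A1 = {1}
    have hA1eq : A1 = {1} := by
      ext a
      rw [hA1, mem_filter, mem_range, Finset.mem_singleton]
      constructor
      · rintro ⟨han, _, hq⟩
        rw [hd3, pow_one] at hq
        have : (a : ZMod n).val = (1 : ZMod n).val := by rw [hq]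
        rwa [ZMod.val_natCast_of_lt han, ZMod.val_one] at this
      · rintro rfl
        refine ⟨by omega, Nat.gcd_one_left n, ?_⟩
        push_cast
        exact one_pow d
    have hboundA1 : ‖∑ a ∈ A1, f a‖ = 1 := by
      rw [hA1eq, Finset.sum_singleton, hf]
      exact norm_e _
    have hfin := hmain
    rw [hboundA1] at hfin
    have := hboundC
    have := hboundBsum
    have hcomb : ‖∑ a ∈ C.filter p, f a‖ ≤ K + 1 + s * K := by linarith
    calc ‖∑ a ∈ C.filter p, f a‖ ≤ K + 1 + s * K := hcomb
      _ ≤ (sigma 1 k.natAbs : ℝ) +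
          (1 + Real.logb 2 n) * (K + (sigma 1 k.natAbs : ℝ)) := by
        nlinarith [mul_nonneg (sub_nonneg.mpr hs_logb) hKpos,
          mul_nonneg (by linarith : (0:ℝ) ≤ 1 + Real.logb 2 n) hσ0]
  · -- d ≥ 3
    have hd3' : 3 ≤ d := by
      rcases hd with ⟨t, ht⟩; omega
    have h2s1 : 2 ^ (s+1) ≤ n := by
      have h1 : 3 * 2 ^ s ≤ d * 2 ^ s := by
        apply Nat.mul_le_mul_right
        omega
      have h2 : 2 ^ (s+1) = 2 * 2 ^ s := by rw [pow_succ]; ring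
      omega
    have hs1_logb : ((s:ℝ) + 1) ≤ Real.logb 2 n := by
      have := hlogb_of_pow (s+1) h2s1
      push_cast at this
      linarith
    have hboundA1 : ‖∑ a ∈ A1, f a‖ ≤ K := by
      have hA1eq : A1 = (range n).filter (fun a : ℕ => (a : ZMod n) ^ d = 1) := by
        rw [hA1]
        apply Finset.filter_congr
        intro a _
        constructor
        · rintro ⟨_, h⟩; exact h
        · intro h
          refine ⟨?_, h⟩
          have hu : IsUnit ((a : ZMod n) ^ d) := h ▸ isUnit_one
          have hu2 : IsUnit (a : ZMod n) := (isUnit_pow_iff (by omega : d ≠ 0)).mp hu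
          exact (ZMod.isUnit_iff_coprime a n).mp hu2
      rw [hA1eq]
      exact class_bound n hn k hk d (by omega) 1 isUnit_one
    have hcomb : ‖∑ a ∈ C.filter p, f a‖ ≤ K + K + s * K := by
      have := hboundC; have := hboundBsum; linarith [hmain]
    calc ‖∑ a ∈ C.filter p, f a‖ ≤ K + K + s * K := hcomb
      _ ≤ (sigma 1 k.natAbs : ℝ) +
          (1 + Real.logb 2 n) * (K + (sigma 1 k.natAbs : ℝ)) := by
        nlinarith [mul_nonneg (sub_nonneg.mpr (by linarith : (s:ℝ) + 1 ≤ Real.logb 2 n)) hKpos,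
          mul_nonneg (by linarith : (0:ℝ) ≤ 1 + Real.logb 2 n) hσ0]
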